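/- For every nonempty word w over a finite alphabet Σ and every natural number K, there exists a straight-line program of size at most K generating w if and only if there exists an assembly plan for w with at most K concatenation steps; that is, SLP(w) ≤ K if and only if ASI(w) ≤ K. -/

import Mathlib

/-- `Avail x i u` : the word `u` is available at step `i` of the plan `x`,
i.e. `u` is a single letter or an earlier step's word. -/
def Avail {α : Type*} {t : ℕ} (x : Fin t → List α) (i : Fin t) (u : List α) : Prop :=
  (∃ a : α, u = [a]) ∨ ∃ j : Fin t, j < i ∧ x j = u

/-- `IsAssemblyPlan t x w` : `x : Fin t → List α` is an assembly plan for `w`,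
each step being a concatenation of two available words, with the last step
equal to `w`; the empty plan (t = 0) is a plan only for single letters. -/
def IsAssemblyPlan {α : Type*} (t : ℕ) (x : Fin t → List α) (w : List α) : Prop :=
  (∀ i : Fin t, ∃ u v : List α, Avail x i u ∧ Avail x i v ∧ x i = u ++ v) ∧
  (if t = 0 then ∃ a : α, w = [a] else ∃ i : Fin t, (i : ℕ) = t - 1 ∧ x i = w)

/-- The assembly index: minimal number of steps of an assembly plan for `w`. -/
noncomputable def ASI {α : Type*} (w : List α) : ℕ :=
  sInf {t | ∃ x : Fin t → List α, IsAssemblyPlan t x w}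

/-- A straight-line program: nonterminals `0,…,m-1`, each with a rule that is
either a terminal `a ∈ Σ` or a concatenation of two earlier nonterminals. -/
structure SLP (α : Type*) where
  m : ℕ
  rule : Fin m → α ⊕ (Fin m × Fin m)
  wf : ∀ i j l, rule i = Sum.inr (j, l) → j < i ∧ l < i

/-- The word derived from nonterminal `i`. -/
def SLP.eval {α : Type*} (G : SLP α) : Fin G.m → List α
  | i =>
    match h : G.rule i with
    | Sum.inl a => [a]
    | Sum.inr (j, l) =>
        have h1 : (j : ℕ) < (i : ℕ) := (G.wf i j l h).1
        have h2 : (l : ℕ) < (i : ℕ) := (G.wf i j l h).2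
        G.eval j ++ G.eval l
termination_by i => (i : ℕ)

/-- The size of an SLP: the number of concatenation rules. -/
def SLP.size {α : Type*} (G : SLP α) : ℕ :=
  (Finset.univ.filter (fun i : Fin G.m => (G.rule i).isRight)).card

/-- `G` generates `w` : the word derived from the last nonterminal is `w`. -/
def SLP.Generates {α : Type*} (G : SLP α) (w : List α) : Prop :=
  ∃ i : Fin G.m, (i : ℕ) = G.m - 1 ∧ G.eval i = w

/-- The minimal size of an SLP generating `w`. -/
noncomputable def SLPsize {α : Type*} (w : List α) : ℕ :=
  sInf {K | ∃ G : SLP α, G.Generates w ∧ G.size = K}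

section Aux
open Classical

theorem SLP.eval_inl {α : Type*} (G : SLP α) (i : Fin G.m) (a : α)
    (h : G.rule i = Sum.inl a) : G.eval i = [a] := by
  rw [SLP.eval]; split <;> simp_all

theorem SLP.eval_inr {α : Type*} (G : SLP α) (i : Fin G.m) (j l : Fin G.m)
    (h : G.rule i = Sum.inr (j, l)) : G.eval i = G.eval j ++ G.eval l := by
  rw [SLP.eval]; split <;> simp_all

/-- Index (in `Fin (cα + t)`) of an available word. -/
noncomputable def availIdx {α : Type*} {t : ℕ} (cα : ℕ) (e : α ≃ Fin cα)
    (x : Fin t → List α) (i : Fin t) (u : List α) : ℕ :=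
  if h : ∃ a : α, u = [a] then (e h.choose : ℕ)
  else if h2 : ∃ j : Fin t, j < i ∧ x j = u then cα + (h2.choose : ℕ) else 0

theorem availIdx_lt {α : Type*} {t cα : ℕ} (e : α ≃ Fin cα)
    (x : Fin t → List α) (i : Fin t) (u : List α) :
    availIdx cα e x i u < cα + t := by
  rw [availIdx]
  split
  · have := (e ‹∃ a : α, u = [a]›.choose).isLt
    have := i.isLt; omega
  · split
    · have := (‹∃ j : Fin t, j < i ∧ x j = u›.choose).isLt; omega
    · have := i.isLt; omega

theorem availIdx_lt' {α : Type*} {t cα : ℕ} (e : α ≃ Fin cα)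
    (x : Fin t → List α) (i : Fin t) (u : List α) (h : Avail x i u) :
    availIdx cα e x i u < cα + (i : ℕ) := by
  rw [availIdx]
  split
  · have := (e ‹∃ a : α, u = [a]›.choose).isLt; omega
  · rcases h with h | h
    · exact absurd h ‹_›
    · rw [dif_pos h]
      have := h.choose_spec.1
      have : (h.choose : ℕ) < (i : ℕ) := this
      omega

theorem availIdx_spec {α : Type*} {t cα : ℕ} (e : α ≃ Fin cα)
    (x : Fin t → List α) (i : Fin t) (u : List α) (h : Avail x i u) :
    (∃ hlt : availIdx cα e x i u < cα, u = [e.symm ⟨availIdx cα e x i u, hlt⟩]) ∨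
    (∃ j : Fin t, availIdx cα e x i u = cα + (j : ℕ) ∧ j < i ∧ x j = u) := by
  rw [availIdx]
  split
  · rename_i ha
    left
    refine ⟨(e ha.choose).isLt, ?_⟩
    simp only [Fin.eta, Equiv.symm_apply_apply]
    exact ha.choose_spec
  · rcases h with h | h
    · exact absurd h ‹_›
    · rw [dif_pos h]
      exact Or.inr ⟨h.choose, rfl, h.choose_spec⟩

/-- The rule function of the SLP built from a plan. -/
noncomputable def planRule {α : Type*} {t cα : ℕ} (e : α ≃ Fin cα)
    (x : Fin t → List α) (uv : Fin t → List α × List α)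
    (i : Fin (cα + t)) : α ⊕ (Fin (cα + t) × Fin (cα + t)) :=
  if h : (i : ℕ) < cα then Sum.inl (e.symm ⟨(i : ℕ), h⟩)
  else
    have ht : (i : ℕ) - cα < t := by have := i.isLt; omega
    Sum.inr (⟨availIdx cα e x ⟨(i : ℕ) - cα, ht⟩ (uv ⟨(i : ℕ) - cα, ht⟩).1,
               availIdx_lt e x _ _⟩,
             ⟨availIdx cα e x ⟨(i : ℕ) - cα, ht⟩ (uv ⟨(i : ℕ) - cα, ht⟩).2,
               availIdx_lt e x _ _⟩)

/-- The SLP built from a plan. -/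
noncomputable def planSLP {α : Type*} {t cα : ℕ} (e : α ≃ Fin cα)
    (x : Fin t → List α) (uv : Fin t → List α × List α)
    (huv : ∀ i : Fin t, Avail x i (uv i).1 ∧ Avail x i (uv i).2) : SLP α where
  m := cα + t
  rule := planRule e x uv
  wf := by
    intro i j l h
    rw [planRule] at h
    split at h
    · exact absurd h (by simp)
    · rename_i hc
      have ht : (i : ℕ) - cα < t := by have := i.isLt; omega
      rw [Sum.inr.injEq, Prod.mk.injEq] at h
      obtain ⟨h1, h2⟩ := h
      subst h1; subst h2
      constructor
      · rw [Fin.lt_def]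
        refine lt_of_lt_of_le (availIdx_lt' e x _ _ ((huv _).1)) ?_
        simp; omega
      · rw [Fin.lt_def]
        refine lt_of_lt_of_le (availIdx_lt' e x _ _ ((huv _).2)) ?_
        simp; omega

theorem planSLP_eval_lt {α : Type*} {t cα : ℕ} (e : α ≃ Fin cα)
    (x : Fin t → List α) (uv : Fin t → List α × List α)
    (huv : ∀ i : Fin t, Avail x i (uv i).1 ∧ Avail x i (uv i).2)
    (k : Fin (cα + t)) (hk : (k : ℕ) < cα) :
    (planSLP e x uv huv).eval k = [e.symm ⟨(k : ℕ), hk⟩] := by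
  apply SLP.eval_inl
  show planRule e x uv k = _
  rw [planRule, dif_pos hk]
  rfl

theorem planRule_high {α : Type*} {t cα : ℕ} (e : α ≃ Fin cα)
    (x : Fin t → List α) (uv : Fin t → List α × List α)
    (k : Fin (cα + t)) (i : Fin t) (hk : (k : ℕ) = cα + (i : ℕ)) :
    planRule e x uv k = Sum.inr
      (⟨availIdx cα e x i (uv i).1, availIdx_lt e x i (uv i).1⟩,
       ⟨availIdx cα e x i (uv i).2, availIdx_lt e x i (uv i).2⟩) := by
  rw [planRule, dif_neg (by omega)]
  have h2 : (k : ℕ) - cα = (i : ℕ) := by omega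
  simp only [h2, Fin.eta]

theorem planSLP_eval_step {α : Type*} {t cα : ℕ} (e : α ≃ Fin cα)
    (x : Fin t → List α) (uv : Fin t → List α × List α)
    (huv : ∀ i : Fin t, Avail x i (uv i).1 ∧ Avail x i (uv i).2)
    (hx : ∀ i : Fin t, x i = (uv i).1 ++ (uv i).2)
    (i : Fin t) (k : Fin (cα + t)) (hk : (k : ℕ) = cα + (i : ℕ)) :
    (planSLP e x uv huv).eval k = x i := by
  suffices H : ∀ n : ℕ, ∀ i : Fin t, (i : ℕ) ≤ n → ∀ k : Fin (cα + t),
      (k : ℕ) = cα + (i : ℕ) → (planSLP e x uv huv).eval k = x i from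
    H (i : ℕ) i le_rfl k hk
  intro n
  induction n using Nat.strong_induction_on with
  | _ n IH =>
    intro i hi k hk
    have hrule := planRule_high e x uv k i hk
    have heval := SLP.eval_inr (planSLP e x uv huv) k _ _ hrule
    rw [heval, hx i]
    congr 1
    · rcases availIdx_spec e x i (uv i).1 ((huv i).1) with ⟨hlt, hu⟩ | ⟨j, hj, hji, hxj⟩
      · rw [planSLP_eval_lt e x uv huv _ (by simpa using hlt)]
        exact hu.symm
      · have hjn : (j : ℕ) < n := lt_of_lt_of_le hji hi
        rw [IH (j : ℕ) hjn j le_rfl _ (by simpa using hj)]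
        exact hxj
    · rcases availIdx_spec e x i (uv i).2 ((huv i).2) with ⟨hlt, hu⟩ | ⟨j, hj, hji, hxj⟩
      · rw [planSLP_eval_lt e x uv huv _ (by simpa using hlt)]
        exact hu.symm
      · have hjn : (j : ℕ) < n := lt_of_lt_of_le hji hi
        rw [IH (j : ℕ) hjn j le_rfl _ (by simpa using hj)]
        exact hxj

theorem planSLP_size {α : Type*} {t cα : ℕ} (e : α ≃ Fin cα)
    (x : Fin t → List α) (uv : Fin t → List α × List α)
    (huv : ∀ i : Fin t, Avail x i (uv i).1 ∧ Avail x i (uv i).2) :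
    (planSLP e x uv huv).size = t := by
  have h1 : ∀ i : Fin (cα + t), (planRule e x uv i).isRight ↔ cα ≤ (i : ℕ) := by
    intro i
    rw [planRule]
    split <;> simp <;> omega
  have h2 : (Finset.univ.filter (fun i : Fin (cα + t) => ((planSLP e x uv huv).rule i).isRight)) =
      Finset.map ⟨fun j : Fin t => (⟨cα + (j : ℕ), by omega⟩ : Fin (cα + t)),
        by intro a b hab; simpa [Fin.ext_iff] using hab⟩ Finset.univ := by
    ext i
    simp only [Finset.mem_filter, Finset.mem_univ, true_and, Finset.mem_map,
      Function.Embedding.coeFn_mk]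
    rw [show ((planSLP e x uv huv).rule i).isRight = true ↔ cα ≤ (i : ℕ) from h1 i]
    constructor
    · intro hc
      exact ⟨⟨(i : ℕ) - cα, by have := i.isLt; omega⟩, Fin.ext (by show cα + ((i : ℕ) - cα) = (i : ℕ); omega)⟩
    · rintro ⟨j, rfl⟩
      exact Nat.le_add_right _ _
  show (Finset.univ.filter
      (fun i : Fin (cα + t) => ((planSLP e x uv huv).rule i).isRight)).card = t
  rw [h2, Finset.card_map, Finset.card_univ, Fintype.card_fin]

theorem plan_to_slp {α : Type*} [Fintype α] {t : ℕ} {x : Fin t → List α} {w : List α}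
    (hp : IsAssemblyPlan t x w) : ∃ G : SLP α, G.Generates w ∧ G.size ≤ t := by
  classical
  obtain ⟨hx, hlast⟩ := hp
  by_cases ht : t = 0
  · subst ht
    simp only [if_pos rfl] at hlast
    obtain ⟨a, rfl⟩ := hlast
    refine ⟨⟨1, fun _ => Sum.inl a, by simp⟩, ⟨⟨0, by show (0:ℕ) < 1; omega⟩,
      by show (0:ℕ) = 1 - 1; omega, ?_⟩, by simp [SLP.size]⟩
    exact SLP.eval_inl _ _ a rfl
  · rw [if_neg ht] at hlast
    obtain ⟨ilast, hilast, hxlast⟩ := hlast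
    set cα := Fintype.card α with hcα
    set e : α ≃ Fin cα := Fintype.equivFin α with he
    set uv : Fin t → List α × List α :=
      fun i => ((hx i).choose, (hx i).choose_spec.choose) with huvdef
    have huv : ∀ i : Fin t, Avail x i (uv i).1 ∧ Avail x i (uv i).2 := fun i =>
      ⟨(hx i).choose_spec.choose_spec.1, (hx i).choose_spec.choose_spec.2.1⟩
    have hxuv : ∀ i : Fin t, x i = (uv i).1 ++ (uv i).2 := fun i =>
      (hx i).choose_spec.choose_spec.2.2
    refine ⟨planSLP e x uv huv, ⟨⟨cα + (t - 1), by show cα + (t-1) < cα + t; omega⟩, ?_, ?_⟩, ?_⟩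
    · show cα + (t - 1) = (planSLP e x uv huv).m - 1
      show cα + (t - 1) = cα + t - 1
      omega
    · rw [← hxlast]
      exact planSLP_eval_step e x uv huv hxuv ilast _ (by simp [hilast])
    · rw [planSLP_size]

theorem slp_to_plan {α : Type*} (G : SLP α) (w : List α) (hG : G.Generates w) :
    ∃ t, ∃ x : Fin t → List α, IsAssemblyPlan t x w ∧ t ≤ G.size := by
  classical
  obtain ⟨i0, hi0, hev⟩ := hG
  rcases hr0 : G.rule i0 with a | ⟨j0, l0⟩
  · have hwa : w = [a] := by rw [← hev, SLP.eval_inl G i0 a hr0]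
    exact ⟨0, Fin.elim0, ⟨fun i => i.elim0, by rw [if_pos rfl]; exact ⟨a, hwa⟩⟩, Nat.zero_le _⟩
  · set s := Finset.univ.filter (fun i : Fin G.m => (G.rule i).isRight) with hs
    have hcard : s.card = G.size := rfl
    set σ := s.orderIsoOfFin hcard with hσ
    set T := G.size with hT
    set x : Fin T → List α := fun k => G.eval (σ k) with hxdef
    have havail : ∀ (k : Fin T) (j : Fin G.m), j < (σ k : Fin G.m) →
        Avail x k (G.eval j) := by
      intro k j hj
      rcases hrj : G.rule j with b | ⟨p, q⟩
      · exact Or.inl ⟨b, SLP.eval_inl G j b hrj⟩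
      · have hjs : j ∈ s := by simp [hs, hrj]
        refine Or.inr ⟨σ.symm ⟨j, hjs⟩, ?_, ?_⟩
        · rw [← σ.lt_iff_lt, σ.apply_symm_apply] at *
          exact Subtype.coe_lt_coe.mp (by simpa using hj)
        · show G.eval (σ (σ.symm ⟨j, hjs⟩) : Fin G.m) = G.eval j
          rw [σ.apply_symm_apply]
    have hplan1 : ∀ k : Fin T, ∃ u v, Avail x k u ∧ Avail x k v ∧ x k = u ++ v := by
      intro k
      have hks : (σ k : Fin G.m) ∈ s := (σ k).2
      have hright : (G.rule (σ k : Fin G.m)).isRight := (Finset.mem_filter.mp hks).2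
      rcases hr : G.rule (σ k : Fin G.m) with b | ⟨p, q⟩
      · rw [hr] at hright; simp at hright
      · exact ⟨G.eval p, G.eval q, havail k p (G.wf _ _ _ hr).1,
          havail k q (G.wf _ _ _ hr).2, SLP.eval_inr _ _ _ _ hr⟩
    have hi0s : i0 ∈ s := by simp [hs, hr0]
    have hTpos : T ≠ 0 := by
      intro h
      have hc0 : s.card = 0 := by rw [hcard]; exact h
      rw [Finset.card_eq_zero] at hc0
      rw [hc0] at hi0s
      simp at hi0s
    set k0 := σ.symm ⟨i0, hi0s⟩ with hk0def
    have hk0 : (σ k0 : Fin G.m) = i0 := by rw [hk0def, σ.apply_symm_apply]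
    have hk0v : (k0 : ℕ) = T - 1 := by
      by_contra hne
      have hlt : (k0 : ℕ) < T - 1 := by have := k0.isLt; omega
      set km : Fin T := ⟨T - 1, by omega⟩ with hkm
      have h1 : σ k0 < σ km := σ.lt_iff_lt.mpr (by rw [Fin.lt_def]; simpa [hkm] using hlt)
      have h3 : (i0 : ℕ) < ((σ km : Fin G.m) : ℕ) := by
        have := Subtype.coe_lt_coe.mpr h1
        rw [hk0] at this
        exact this
      have h2 : ((σ km : Fin G.m) : ℕ) < G.m := (σ km : Fin G.m).isLt
      omega
    refine ⟨T, x, ⟨hplan1, ?_⟩, le_rfl⟩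
    rw [if_neg hTpos]
    refine ⟨k0, hk0v, ?_⟩
    show G.eval (σ k0 : Fin G.m) = w
    rw [hk0, hev]

theorem exists_plan {α : Type*} (w : List α) (hw : w ≠ []) :
    ∃ t, ∃ x : Fin t → List α, IsAssemblyPlan t x w := by
  by_cases h1 : w.length = 1
  · obtain ⟨a, rfl⟩ := List.length_eq_one_iff.mp h1
    exact ⟨0, Fin.elim0, fun i => i.elim0, by rw [if_pos rfl]; exact ⟨a, rfl⟩⟩
  · have hlen : 2 ≤ w.length := by
      have := List.length_pos_iff.mpr hw; omega
    refine ⟨w.length - 1, fun i => w.take ((i : ℕ) + 2), ⟨?_, ?_⟩⟩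
    · intro i
      have hi2 : (i : ℕ) + 1 < w.length := by have := i.isLt; omega
      refine ⟨w.take ((i : ℕ) + 1), [w.get ⟨(i : ℕ) + 1, hi2⟩], ?_, Or.inl ⟨_, rfl⟩, ?_⟩
      · rcases Nat.eq_zero_or_pos (i : ℕ) with h0 | h0
        · left
          refine ⟨w.get ⟨0, by omega⟩, ?_⟩
          rw [h0]
          rcases w with _ | ⟨a, l⟩
          · simp at hw
          · simp
        · right
          refine ⟨⟨(i : ℕ) - 1, by have := i.isLt; omega⟩, by rw [Fin.lt_def]; simp; omega, ?_⟩
          show w.take (((i : ℕ) - 1) + 2) = w.take ((i : ℕ) + 1)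
          congr 1
          omega
      · show w.take ((i : ℕ) + 2) = w.take ((i : ℕ) + 1) ++ [w.get ⟨(i : ℕ) + 1, hi2⟩]
        rw [show (i : ℕ) + 2 = ((i : ℕ) + 1) + 1 from rfl, List.take_succ]
        congr 1
        rw [List.getElem?_eq_getElem hi2]
        simp [List.get_eq_getElem]
    · rw [if_neg (by omega)]
      refine ⟨⟨w.length - 1 - 1, by omega⟩, rfl, ?_⟩
      show w.take ((w.length - 1 - 1) + 2) = w
      rw [show (w.length - 1 - 1) + 2 = w.length by omega]
      exact List.take_length
end Aux

theorem slp_le_iff_asi_le {α : Type*} [Fintype α] (w : List α) (hw : w ≠ []) (K : ℕ) :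
    ((∃ G : SLP α, G.Generates w ∧ G.size ≤ K) ↔
      (∃ (t : ℕ) (x : Fin t → List α), IsAssemblyPlan t x w ∧ t ≤ K)) ∧
    (SLPsize w ≤ K ↔ ASI w ≤ K) := by
  classical
  have part1 : (∃ G : SLP α, G.Generates w ∧ G.size ≤ K) ↔
      (∃ (t : ℕ) (x : Fin t → List α), IsAssemblyPlan t x w ∧ t ≤ K) := by
    constructor
    · rintro ⟨G, hG, hs⟩
      obtain ⟨t, x, hp, ht⟩ := slp_to_plan G w hG
      exact ⟨t, x, hp, ht.trans hs⟩
    · rintro ⟨t, x, hp, ht⟩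
      obtain ⟨G, hG, hs⟩ := plan_to_slp hp
      exact ⟨G, hG, hs.trans ht⟩
  refine ⟨part1, ?_⟩
  obtain ⟨t0, x0, hp0⟩ := exists_plan w hw
  obtain ⟨G0, hG0, _⟩ := plan_to_slp hp0
  have hA : {t | ∃ x : Fin t → List α, IsAssemblyPlan t x w}.Nonempty := ⟨t0, x0, hp0⟩
  have hS : {K | ∃ G : SLP α, G.Generates w ∧ G.size = K}.Nonempty := ⟨G0.size, G0, hG0, rfl⟩
  constructor
  · intro h
    obtain ⟨G, hG, hsz⟩ := Nat.sInf_mem hS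
    obtain ⟨t, x, hp, ht⟩ := slp_to_plan G w hG
    refine le_trans (Nat.sInf_le ⟨x, hp⟩) ?_
    rw [hsz] at ht
    exact ht.trans h
  · intro h
    obtain ⟨x, hp⟩ := Nat.sInf_mem hA
    obtain ⟨G, hG, hs⟩ := plan_to_slp hp
    exact le_trans (Nat.sInf_le ⟨G, hG, rfl⟩) (hs.trans h)
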